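/- For n ≥ 3, the number of partial isometries of the cycle graph C_n equals n·2^{n+1} - n² - 2n + 1 if n is odd, and n·2^{n+1} - (3/2)n² - 2n + 1 if n is even; equivalently |DPC_n| = n·2^{n+1} - ((-1)^n + 5)/4 · n² - 2n + 1. -/

import Mathlib

/-- Geodesic distance on the cycle graph `C_n` with vertices `{1,...,n}`:
`d(x,y) = min (|x-y|, n-|x-y|)`. -/
def cdist (n x y : ℕ) : ℕ := min ((x : ℤ) - y).natAbs (n - ((x : ℤ) - y).natAbs)

/-- The n-cycle permutation `g` of `{1,...,n}`: `i ↦ i+1 (mod n)`. -/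
def gfun (n i : ℕ) : ℕ := if i < n then i + 1 else 1

/-- The reversal permutation `h` of `{1,...,n}`: `i ↦ n-i+1`. -/
def hfun (n i : ℕ) : ℕ := n - i + 1

/-- Left-to-right composition of partial maps (apply `f`, then `g`). -/
def pcomp (f g : ℕ → Option ℕ) : ℕ → Option ℕ := fun x => (f x).bind g

/-- The partial identity on `{1,...,n}`. -/
def pid (n : ℕ) : ℕ → Option ℕ := fun i => if i ∈ Finset.Icc 1 n then some i else none

/-- `g` as a partial map with domain `{1,...,n}`. -/
def gmap (n : ℕ) : ℕ → Option ℕ := fun i => if i ∈ Finset.Icc 1 n then some (gfun n i) else none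

/-- `h` as a partial map with domain `{1,...,n}`. -/
def hmap (n : ℕ) : ℕ → Option ℕ := fun i => if i ∈ Finset.Icc 1 n then some (hfun n i) else none

/-- `e_j`: the partial identity with domain `{1,...,n} \ {j}`. -/
def emap (n j : ℕ) : ℕ → Option ℕ := fun i => if i ∈ Finset.Icc 1 n ∧ i ≠ j then some i else none

/-- `k`-th power of a partial map (with identity `pid n`). -/
def ppow (n : ℕ) (f : ℕ → Option ℕ) : ℕ → (ℕ → Option ℕ)
  | 0 => pid n
  | k + 1 => pcomp f (ppow n f k)

/-- `f` is a partial isometry of the cycle graph `C_n`: a partial injective map on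
`{1,...,n}` preserving the cycle distance. -/
def PIso (n : ℕ) (f : ℕ → Option ℕ) : Prop :=
  (∀ x y, f x = some y → x ∈ Finset.Icc 1 n ∧ y ∈ Finset.Icc 1 n) ∧
  (∀ x y z, f x = some z → f y = some z → x = y) ∧
  (∀ x y x' y', f x = some x' → f y = some y' → cdist n x' y' = cdist n x y)

/-- Domain of a partial map, as a set. -/
def DomS (f : ℕ → Option ℕ) : Set ℕ := {x | (f x).isSome}

/-- Image of a partial map, as a set. -/
def ImS (f : ℕ → Option ℕ) : Set ℕ := {y | ∃ x, f x = some y}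

/-- Domain of a partial map on `{1,...,n}`, as a finset. -/
def domF (n : ℕ) (f : ℕ → Option ℕ) : Finset ℕ :=
  (Finset.Icc 1 n).filter (fun x => (f x).isSome)

/-- The dihedral group `D_{2n}` as the set of the permutations `g^k` and `h·g^k`
(acting on the right, so `h·g^k` applies `h` first) of `{1,...,n}`, `0 ≤ k ≤ n-1`. -/
def Dih (n : ℕ) : Set (ℕ → ℕ) :=
  {σ | ∃ k < n, σ = (gfun n)^[k] ∨ σ = fun i => (gfun n)^[k] (hfun n i)}

/-- `σ` extends the partial map `f`. -/
def Extends (σ : ℕ → ℕ) (f : ℕ → Option ℕ) : Prop := ∀ x y, f x = some y → σ x = y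


open Finset

set_option linter.unusedSectionVars false

section Aux
variable (n : ℕ) [NeZero n]

def toN (z : ZMod n) : ℕ := if z.val = 0 then n else z.val

def dz0 (w : ZMod n) : ℕ := min w.val (n - w.val)

variable {n}

lemma npos : 0 < n := Nat.pos_of_ne_zero (NeZero.ne n)

lemma toN_mem (z : ZMod n) : toN n z ∈ Finset.Icc 1 n := by
  have h := ZMod.val_lt z
  unfold toN; split <;> simp <;> omega

lemma cast_toN (z : ZMod n) : ((toN n z : ℕ) : ZMod n) = z := by
  unfold toN; split
  · next h => have : z = 0 := (ZMod.val_eq_zero z).mp h; simp [this]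
  · simp [ZMod.natCast_val]

lemma toN_cast {x : ℕ} (hx : x ∈ Finset.Icc 1 n) : toN n ((x : ZMod n)) = x := by
  simp only [Finset.mem_Icc] at hx
  rcases eq_or_lt_of_le hx.2 with h | h
  · subst h; unfold toN; simp
  · unfold toN; rw [ZMod.val_cast_of_lt h]; split <;> omega

lemma toN_inj {z w : ZMod n} (h : toN n z = toN n w) : z = w := by
  rw [← cast_toN z, ← cast_toN w, h]

lemma cast_inj_Icc {x y : ℕ} (hx : x ∈ Finset.Icc 1 n) (hy : y ∈ Finset.Icc 1 n)
    (h : (x : ZMod n) = (y : ZMod n)) : x = y := by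
  rw [← toN_cast hx, ← toN_cast hy, h]

lemma self_cast_val (w : ZMod n) : w = ((w.val : ℕ) : ZMod n) := by simp [ZMod.natCast_val]

lemma dz0_neg (w : ZMod n) : dz0 n (-w) = dz0 n w := by
  rcases eq_or_ne w 0 with rfl | h
  · simp
  · have hv : w.val < n := ZMod.val_lt w
    have hv0 : w.val ≠ 0 := fun h0 => h ((ZMod.val_eq_zero w).mp h0)
    have hrw : (-w) = ((n - w.val : ℕ) : ZMod n) := by
      rw [Nat.cast_sub hv.le, ZMod.natCast_self, ← self_cast_val]; ring
    rw [dz0, hrw, ZMod.val_cast_of_lt (by omega)]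
    unfold dz0; omega

lemma dz0_eq_iff {w w' : ZMod n} : dz0 n w = dz0 n w' ↔ (w = w' ∨ w = -w') := by
  constructor
  · intro h
    have hw : w.val < n := ZMod.val_lt w
    have hw' : w'.val < n := ZMod.val_lt w'
    unfold dz0 at h
    have h2 : w.val = w'.val ∨ w.val + w'.val = n := by omega
    rcases h2 with h2 | h2
    · left; rw [self_cast_val w, self_cast_val w', h2]
    · right
      rw [self_cast_val w, show w.val = n - w'.val from by omega,
        Nat.cast_sub hw'.le, ZMod.natCast_self, zero_sub, ← self_cast_val]
  · rintro (rfl | rfl)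
    · rfl
    · exact dz0_neg w'

end Aux
open Finset

variable {n : ℕ} [NeZero n]

omit [NeZero n] in
lemma cdist_comm (n x y : ℕ) : cdist n x y = cdist n y x := by
  unfold cdist; omega

set_option linter.unusedSectionVars false in
lemma cdist_eq_dz0_le {x y : ℕ} (hy1 : 1 ≤ y) (hx : x ≤ n) (hyx : y ≤ x) :
    cdist n x y = dz0 n ((x : ZMod n) - y) := by
  have h1 : ((x:ℤ) - y).natAbs = x - y := by omega
  have h2 : (x : ZMod n) - y = ((x - y : ℕ) : ZMod n) := by
    rw [Nat.cast_sub hyx]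
  rw [cdist, h1, h2, dz0, ZMod.val_cast_of_lt (by omega)]

lemma cdist_eq_dz0 {x y : ℕ} (hx : x ∈ Finset.Icc 1 n) (hy : y ∈ Finset.Icc 1 n) :
    cdist n x y = dz0 n ((x : ZMod n) - y) := by
  simp only [Finset.mem_Icc] at hx hy
  rcases le_total y x with h | h
  · exact cdist_eq_dz0_le hy.1 hx.2 h
  · rw [cdist_comm, cdist_eq_dz0_le hx.1 hy.2 h, ← dz0_neg]
    congr 1; ring

/-- unique element of order two -/
lemma order_two_unique {w w' : ZMod n} (hw : 2 * w = 0) (hw' : 2 * w' = 0)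
    (h0 : w ≠ 0) (h0' : w' ≠ 0) : w = w' := by
  have e : ∀ v : ZMod n, 2 * v = 0 → v ≠ 0 → 2 * v.val = n := by
    intro v hv hv0
    have h1 : ((2 * v.val : ℕ) : ZMod n) = 0 := by
      push_cast; rw [← self_cast_val]; exact hv
    have h2 : n ∣ 2 * v.val := (ZMod.natCast_eq_zero_iff _ n).mp h1
    have h3 : v.val < n := ZMod.val_lt v
    have h4 : v.val ≠ 0 := fun hh => hv0 ((ZMod.val_eq_zero v).mp hh)
    rcases h2 with ⟨c, hc⟩
    have hc0 : c ≠ 0 := by rintro rfl; omega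
    have hc2 : ¬ 2 ≤ c := fun h => by have := Nat.mul_le_mul_left n h; omega
    have hc1 : c = 1 := by omega
    rw [hc1, mul_one] at hc; omega
  have e1 := e w hw h0
  have e2 := e w' hw' h0'
  rw [self_cast_val w, self_cast_val w']
  congr 1; omega

/-- antipodal characterization over ℕ -/
lemma antipodal_iff {x y : ℕ} (hx : x ∈ Finset.Icc 1 n) (hy : y ∈ Finset.Icc 1 n) :
    (2 * ((x : ZMod n) - y) = 0 ∧ (x : ZMod n) ≠ y) ↔
      (n % 2 = 0 ∧ (x + n / 2 = y ∨ y + n / 2 = x)) := by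
  simp only [Finset.mem_Icc] at hx hy
  constructor
  · rintro ⟨h2, hne⟩
    have hxy : x ≠ y := fun h => hne (by rw [h])
    have key : ∀ a b : ℕ, 1 ≤ b → a ≤ n → b < a → 2 * ((a : ZMod n) - b) = 0 →
        n % 2 = 0 ∧ b + n / 2 = a := by
      intro a b hb1 han hba hab
      have h2 : (a : ZMod n) - b = ((a - b : ℕ) : ZMod n) := by rw [Nat.cast_sub hba.le]
      rw [h2] at hab
      have : ((2 * (a - b) : ℕ) : ZMod n) = 0 := by push_cast; rw [mul_comm] at hab ⊢; exact hab
      have hd : n ∣ 2 * (a - b) := (ZMod.natCast_eq_zero_iff _ n).mp this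
      rcases hd with ⟨c, hc⟩
      have hc0 : c ≠ 0 := by rintro rfl; omega
      have hc2 : ¬ 2 ≤ c := fun h => by have := Nat.mul_le_mul_left n h; omega
      have hc1 : c = 1 := by omega
      rw [hc1, mul_one] at hc; omega
    rcases lt_or_gt_of_ne hxy with h | h
    · have := key y x hx.1 hy.2 h (by rw [show (y:ZMod n) - x = -((x:ZMod n) - y) by ring] at *; linear_combination -h2)
      exact ⟨this.1, Or.inl this.2⟩
    · have := key x y hy.1 hx.2 h h2
      exact ⟨this.1, Or.inr this.2⟩
  · rintro ⟨hev, h | h⟩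
    · have hh : (y : ZMod n) = (x : ZMod n) + ((n/2 : ℕ) : ZMod n) := by
        rw [← Nat.cast_add, h]
      have hn2 : ((n/2 : ℕ) : ZMod n) ≠ 0 := by
        rw [Ne, ZMod.natCast_eq_zero_iff]
        intro hd; have := Nat.le_of_dvd (by omega) hd; omega
      constructor
      · rw [hh]; have : ((2 * (n/2) : ℕ) : ZMod n) = 0 := by
          rw [show 2 * (n/2) = n from by omega, ZMod.natCast_self]
        push_cast at this; linear_combination -this
      · rw [hh]; intro hc
        have : ((n/2 : ℕ) : ZMod n) = 0 := by linear_combination -hc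
        exact hn2 this
    · have hh : (x : ZMod n) = (y : ZMod n) + ((n/2 : ℕ) : ZMod n) := by
        rw [← Nat.cast_add, h]
      have hn2 : ((n/2 : ℕ) : ZMod n) ≠ 0 := by
        rw [Ne, ZMod.natCast_eq_zero_iff]
        intro hd; have := Nat.le_of_dvd (by omega) hd; omega
      constructor
      · rw [hh]; have : ((2 * (n/2) : ℕ) : ZMod n) = 0 := by
          rw [show 2 * (n/2) = n from by omega, ZMod.natCast_self]
        push_cast at this; linear_combination this
      · rw [hh]; intro hc
        have : ((n/2 : ℕ) : ZMod n) = 0 := by linear_combination hc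
        exact hn2 this

section Main
variable (n : ℕ) [NeZero n]

/-- dihedral element: rotation `z ↦ z + k` (b = false) or reflection `z ↦ k - z` (b = true),
transported to `{1,...,n}`. -/
def pdih (k : ZMod n) (b : Bool) : ℕ → ℕ :=
  fun i => toN n (if b then k - (i : ZMod n) else (i : ZMod n) + k)

/-- restriction of a total map to a finset, as a partial map -/
def restr (σ : ℕ → ℕ) (A : Finset ℕ) : ℕ → Option ℕ :=
  fun i => if i ∈ A then some (σ i) else none

variable {n}

lemma restr_eq_of_eqOn {σ τ : ℕ → ℕ} {A : Finset ℕ} (h : ∀ i ∈ A, σ i = τ i) :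
    restr σ A = restr τ A := by
  funext i; unfold restr; split
  · next hi => rw [h i hi]
  · rfl

lemma domF_restr {σ : ℕ → ℕ} {A : Finset ℕ} (hA : A ⊆ Finset.Icc 1 n) :
    domF n (restr σ A) = A := by
  ext i; unfold domF restr; rw [Finset.mem_filter]
  constructor
  · rintro ⟨-, h⟩; by_contra hi; simp [hi] at h
  · intro hi; exact ⟨hA hi, by simp [hi]⟩

lemma restr_domF_inj {σ τ : ℕ → ℕ} {A B : Finset ℕ} (hA : A ⊆ Finset.Icc 1 n)
    (hB : B ⊆ Finset.Icc 1 n) (h : restr σ A = restr τ B) : A = B := by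
  rw [← domF_restr (σ := σ) hA, ← domF_restr (σ := τ) hB, h]

lemma pdih_mem (k : ZMod n) (b : Bool) (i : ℕ) : pdih n k b i ∈ Finset.Icc 1 n := toN_mem _

lemma cast_pdih (k : ZMod n) (b : Bool) (i : ℕ) :
    ((pdih n k b i : ℕ) : ZMod n) = if b then k - (i : ZMod n) else (i : ZMod n) + k :=
  cast_toN _

/-- restrictions of dihedral maps are partial isometries -/
lemma piso_restr (k : ZMod n) (b : Bool) {A : Finset ℕ} (hA : A ⊆ Finset.Icc 1 n) :
    PIso n (restr (pdih n k b) A) := by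
  have hmem : ∀ x y, restr (pdih n k b) A x = some y →
      x ∈ A ∧ y = pdih n k b x := by
    intro x y h
    unfold restr at h
    split at h
    · next hx => exact ⟨hx, (Option.some_inj.mp h).symm⟩
    · exact absurd h (by simp)
  refine ⟨?_, ?_, ?_⟩
  · intro x y h
    obtain ⟨hx, rfl⟩ := hmem x y h
    exact ⟨hA hx, pdih_mem k b x⟩
  · intro x y z hx hy
    obtain ⟨hxA, hzx⟩ := hmem x z hx
    obtain ⟨hyA, hzy⟩ := hmem y z hy
    have : ((pdih n k b x : ℕ) : ZMod n) = ((pdih n k b y : ℕ) : ZMod n) := by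
      rw [← hzx, ← hzy]
    rw [cast_pdih, cast_pdih] at this
    have hxy : (x : ZMod n) = (y : ZMod n) := by
      cases b
      · simp only [Bool.false_eq_true, if_false] at this
        linear_combination this
      · simp only [if_true] at this
        linear_combination -this
    exact cast_inj_Icc (hA hxA) (hA hyA) hxy
  · intro x y x' y' hx hy
    obtain ⟨hxA, rfl⟩ := hmem x x' hx
    obtain ⟨hyA, rfl⟩ := hmem y y' hy
    rw [cdist_eq_dz0 (pdih_mem k b x) (pdih_mem k b y),
      cdist_eq_dz0 (hA hxA) (hA hyA), cast_pdih, cast_pdih]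
    cases b
    · simp only [Bool.false_eq_true, if_false]
      congr 1; ring
    · simp only [if_true]
      rw [show (k - (x:ZMod n)) - (k - (y:ZMod n)) = -((x:ZMod n) - y) from by ring, dz0_neg]

end Main

section Main2
variable {n : ℕ} [NeZero n] {f : ℕ → Option ℕ}

lemma piso_diff (hf : PIso n f) {x y x' y' : ℕ} (hx : f x = some x') (hy : f y = some y') :
    (x' : ZMod n) - y' = (x : ZMod n) - y ∨ (x' : ZMod n) - y' = -((x : ZMod n) - y) := by
  have h := hf.2.2 x y x' y' hx hy
  rw [cdist_eq_dz0 (hf.1 x x' hx).2 (hf.1 y y' hy).2,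
    cdist_eq_dz0 (hf.1 x x' hx).1 (hf.1 y y' hy).1] at h
  exact dz0_eq_iff.mp h

lemma piso_exists_kb (hf : PIso n f) :
    ∃ (k : ZMod n) (b : Bool), ∀ c c', f c = some c' →
      ((c' : ZMod n) = if b then k - (c : ZMod n) else (c : ZMod n) + k) := by
  by_cases hD : ∃ a a' b b', f a = some a' ∧ f b = some b' ∧
      (a : ZMod n) ≠ (b : ZMod n) ∧ 2 * ((a : ZMod n) - (b : ZMod n)) ≠ 0
  · obtain ⟨a, a', b, b', ha, hb, hne, h2⟩ := hD
    rcases piso_diff hf ha hb with hd | hd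
    · refine ⟨(a' : ZMod n) - a, false, fun c c' hc => ?_⟩
      simp only [Bool.false_eq_true, if_false]
      rcases piso_diff hf hc ha with h1 | h1
      · linear_combination h1
      · rcases piso_diff hf hc hb with h1' | h1'
        · have h3 : 2 * ((c : ZMod n) - a) = 0 := by linear_combination h1 - h1' + hd
          linear_combination h1 - h3
        · exact absurd (by linear_combination h1' - h1 - hd) h2
    · refine ⟨(a' : ZMod n) + a, true, fun c c' hc => ?_⟩
      simp only [if_true]
      rcases piso_diff hf hc ha with h1 | h1
      · rcases piso_diff hf hc hb with h1' | h1'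
        · exact absurd (by linear_combination h1 - h1' + hd) h2
        · have h3 : 2 * ((c : ZMod n) - a) = 0 := by linear_combination h1' - h1 - hd
          linear_combination h1 + h3
      · linear_combination h1
  · push_neg at hD
    by_cases h0 : ∃ a a', f a = some a'
    · obtain ⟨a, a', ha⟩ := h0
      refine ⟨(a' : ZMod n) - a, false, fun c c' hc => ?_⟩
      simp only [Bool.false_eq_true, if_false]
      rcases eq_or_ne ((c : ZMod n)) ((a : ZMod n)) with hca | hca
      · have hca' : c = a := cast_inj_Icc (hf.1 c c' hc).1 (hf.1 a a' ha).1 hca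
        subst hca'
        rw [ha] at hc
        rw [Option.some_inj.mp hc.symm]
        ring
      · have h2 := hD c c' a a' hc ha hca
        rcases piso_diff hf hc ha with h1 | h1
        · linear_combination h1
        · linear_combination h1 - h2
    · exact ⟨0, false, fun c c' hc => absurd ⟨c, c', hc⟩ h0⟩

lemma piso_eq_restr (hf : PIso n f) :
    ∃ (k : ZMod n) (b : Bool), f = restr (pdih n k b) (domF n f) := by
  obtain ⟨k, b, hkb⟩ := piso_exists_kb hf
  refine ⟨k, b, ?_⟩
  funext i
  by_cases hi : i ∈ domF n f
  · simp only [restr, if_pos hi]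
    obtain ⟨c', hc'⟩ := Option.isSome_iff_exists.mp ((Finset.mem_filter.mp hi).2)
    rw [hc']
    congr 1
    have hval := hkb i c' hc'
    have hc'm : c' ∈ Finset.Icc 1 n := (hf.1 i c' hc').2
    rw [← toN_cast hc'm, hval]
    rfl
  · simp only [restr, if_neg hi]
    cases hfi : f i with
    | none => rfl
    | some y => exact absurd (Finset.mem_filter.mpr ⟨(hf.1 i y hfi).1, by simp [hfi]⟩) hi

theorem piso_iff :
    PIso n f ↔ ∃ (k : ZMod n) (b : Bool), ∃ A ∈ (Finset.Icc 1 n).powerset,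
      f = restr (pdih n k b) A := by
  constructor
  · intro hf
    obtain ⟨k, b, hres⟩ := piso_eq_restr hf
    exact ⟨k, b, domF n f, Finset.mem_powerset.mpr (Finset.filter_subset _ _), hres⟩
  · rintro ⟨k, b, A, hA, rfl⟩
    exact piso_restr k b (Finset.mem_powerset.mp hA)

end Main2

section Count
variable (n : ℕ) [NeZero n]

open Classical in
noncomputable def SA (A : Finset ℕ) : Finset (ℕ → Option ℕ) :=
  Finset.image (fun p : ZMod n × Bool => restr (pdih n p.1 p.2) A) Finset.univ

open Classical in
noncomputable def Mfin : Finset (ℕ → Option ℕ) :=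
  ((Finset.Icc 1 n).powerset).biUnion (SA n)

variable {n}

lemma mem_SA {A : Finset ℕ} {f : ℕ → Option ℕ} :
    f ∈ SA n A ↔ ∃ (k : ZMod n) (b : Bool), f = restr (pdih n k b) A := by
  classical
  simp only [SA, Finset.mem_image, Finset.mem_univ, true_and]
  constructor
  · rintro ⟨⟨k, b⟩, rfl⟩; exact ⟨k, b, rfl⟩
  · rintro ⟨k, b, rfl⟩; exact ⟨(k, b), rfl⟩

lemma piso_set_eq : {f : ℕ → Option ℕ | PIso n f} = ↑(Mfin n) := by
  classical
  ext f
  simp only [Set.mem_setOf_eq, Finset.mem_coe, Mfin, Finset.mem_biUnion]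
  rw [piso_iff]
  constructor
  · rintro ⟨k, b, A, hA, rfl⟩
    exact ⟨A, hA, mem_SA.mpr ⟨k, b, rfl⟩⟩
  · rintro ⟨A, hA, hf⟩
    obtain ⟨k, b, rfl⟩ := mem_SA.mp hf
    exact ⟨k, b, A, hA, rfl⟩

lemma SA_card_empty : (SA n ∅).card = 1 := by
  classical
  have h : (fun p : ZMod n × Bool => restr (pdih n p.1 p.2) (∅ : Finset ℕ)) =
      fun _ => (fun _ => none : ℕ → Option ℕ) := by
    funext p i; simp [restr]
  rw [SA, h, Finset.image_const Finset.univ_nonempty, Finset.card_singleton]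

lemma SA_card_singleton {x : ℕ} (hx : x ∈ Finset.Icc 1 n) : (SA n {x}).card = n := by
  classical
  have heq : SA n {x} = (Finset.Icc 1 n).image (fun v => restr (fun _ => v) {x}) := by
    ext f
    rw [mem_SA]
    simp only [Finset.mem_image]
    constructor
    · rintro ⟨k, b, rfl⟩
      refine ⟨pdih n k b x, pdih_mem k b x, ?_⟩
      refine (restr_eq_of_eqOn (fun i hi => ?_)).symm
      rw [Finset.mem_singleton.mp hi]
    · rintro ⟨v, hv, rfl⟩
      refine ⟨(v : ZMod n) - x, false, ?_⟩
      refine restr_eq_of_eqOn (fun i hi => ?_)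
      rw [Finset.mem_singleton.mp hi]
      show v = toN n ((x : ZMod n) + ((v : ZMod n) - x))
      rw [show (x : ZMod n) + ((v : ZMod n) - x) = (v : ZMod n) from by ring, toN_cast hv]
  rw [heq, Finset.card_image_of_injOn, Nat.card_Icc]
  · omega
  · intro v _ v' _ h
    have := congrFun h x
    simpa [restr] using this

lemma SA_card_antip {x y : ℕ} (hx : x ∈ Finset.Icc 1 n) (hy : y ∈ Finset.Icc 1 n)
    (hne : (x : ZMod n) ≠ (y : ZMod n)) (h2 : 2 * ((y : ZMod n) - x) = 0) :
    (SA n {x, y}).card = n := by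
  classical
  have hxy : x ≠ y := fun h => hne (by rw [h])
  have heq : SA n {x, y} = (Finset.Icc 1 n).image
      (fun v => restr (fun i => if i = x then v
        else toN n ((v : ZMod n) + ((y : ZMod n) - x))) {x, y}) := by
    ext f
    rw [mem_SA]
    simp only [Finset.mem_image]
    constructor
    · rintro ⟨k, b, rfl⟩
      refine ⟨pdih n k b x, pdih_mem k b x, ?_⟩
      refine (restr_eq_of_eqOn (fun i hi => ?_)).symm
      rcases Finset.mem_insert.mp hi with rfl | hi
      · rw [if_pos rfl]
      · rw [Finset.mem_singleton.mp hi, if_neg hxy.symm, cast_pdih]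
        show toN n (if b then k - (y : ZMod n) else (y : ZMod n) + k) = _
        congr 1
        cases b
        · simp only [Bool.false_eq_true, if_false]; ring
        · simp only [if_true]; linear_combination -h2
    · rintro ⟨v, hv, rfl⟩
      refine ⟨(v : ZMod n) - x, false, ?_⟩
      refine restr_eq_of_eqOn (fun i hi => ?_)
      rcases Finset.mem_insert.mp hi with rfl | hi
      · rw [if_pos rfl]
        show v = toN n ((i : ZMod n) + ((v : ZMod n) - i))
        rw [show (i : ZMod n) + ((v : ZMod n) - i) = (v : ZMod n) from by ring, toN_cast hv]
      · rw [Finset.mem_singleton.mp hi, if_neg hxy.symm]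
        show toN n ((v : ZMod n) + ((y : ZMod n) - x)) =
          toN n ((y : ZMod n) + ((v : ZMod n) - x))
        congr 1; ring
  rw [heq, Finset.card_image_of_injOn, Nat.card_Icc]
  · omega
  · intro v _ v' _ h
    have := congrFun h x
    simpa [restr, hxy] using this

lemma SA_card_generic {A : Finset ℕ} {x y : ℕ} (hxA : x ∈ A) (hyA : y ∈ A)
    (hne : (x : ZMod n) ≠ (y : ZMod n)) (h2 : 2 * ((x : ZMod n) - y) ≠ 0) :
    (SA n A).card = 2 * n := by
  classical
  rw [SA, Finset.card_image_of_injOn]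
  · simp only [Finset.card_univ, Fintype.card_prod, ZMod.card, Fintype.card_bool]
    ring
  · rintro ⟨k, b⟩ - ⟨k', b'⟩ - h
    have ex : ∀ i ∈ A, pdih n k b i = pdih n k' b' i := by
      intro i hi
      have := congrFun h i
      simpa [restr, hi] using this
    have exx : (if b then k - (x:ZMod n) else (x:ZMod n) + k) =
        (if b' then k' - (x:ZMod n) else (x:ZMod n) + k') := toN_inj (ex x hxA)
    have exy : (if b then k - (y:ZMod n) else (y:ZMod n) + k) =
        (if b' then k' - (y:ZMod n) else (y:ZMod n) + k') := toN_inj (ex y hyA)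
    cases b <;> cases b' <;>
      simp only [Bool.false_eq_true, if_false, if_true] at exx exy
    · exact Prod.ext (by linear_combination exx) rfl
    · exact absurd (by linear_combination exx - exy) h2
    · exact absurd (by linear_combination exy - exx) h2
    · exact Prod.ext (by linear_combination exx) rfl

end Count

/-- number of antipodal pairs -/
def ap (n : ℕ) : ℕ := if n % 2 = 0 then n / 2 else 0

section Count2
variable {n : ℕ} [NeZero n]

lemma classify {A : Finset ℕ} (hA : A ⊆ Finset.Icc 1 n)
    (hno : ¬ ∃ x ∈ A, ∃ y ∈ A, (x : ZMod n) ≠ (y : ZMod n) ∧ 2 * ((x:ZMod n) - y) ≠ 0) :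
    A = ∅ ∨ (∃ x ∈ Finset.Icc 1 n, A = {x}) ∨
      (∃ x ∈ A, ∃ y ∈ A, A = {x, y} ∧ (x : ZMod n) ≠ (y : ZMod n) ∧
        2 * ((x:ZMod n) - y) = 0) := by
  push_neg at hno
  have hcard : A.card ≤ 2 := by
    by_contra hc
    push_neg at hc
    obtain ⟨x, hx⟩ := Finset.card_pos.mp (show 0 < A.card by omega)
    obtain ⟨y, hy⟩ := Finset.card_pos.mp (show 0 < (A.erase x).card by
      rw [Finset.card_erase_of_mem hx]; omega)
    have hyA : y ∈ A := Finset.mem_of_mem_erase hy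
    have hyx : y ≠ x := Finset.ne_of_mem_erase hy
    obtain ⟨z, hz⟩ := Finset.card_pos.mp (show 0 < ((A.erase x).erase y).card by
      rw [Finset.card_erase_of_mem hy, Finset.card_erase_of_mem hx]; omega)
    have hzy : z ≠ y := Finset.ne_of_mem_erase hz
    have hzA' : z ∈ A.erase x := Finset.mem_of_mem_erase hz
    have hzx : z ≠ x := Finset.ne_of_mem_erase hzA'
    have hzA : z ∈ A := Finset.mem_of_mem_erase hzA'
    have cne : ∀ {u v : ℕ}, u ∈ A → v ∈ A → u ≠ v → (u : ZMod n) ≠ (v : ZMod n) :=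
      fun hu hv huv h => huv (cast_inj_Icc (hA hu) (hA hv) h)
    have e1 := hno x hx y hyA (cne hx hyA hyx.symm)
    have e2 := hno x hx z hzA (cne hx hzA hzx.symm)
    have d1 : (x : ZMod n) - y ≠ 0 := sub_ne_zero.mpr (cne hx hyA hyx.symm)
    have d2 : (x : ZMod n) - z ≠ 0 := sub_ne_zero.mpr (cne hx hzA hzx.symm)
    have := order_two_unique e1 e2 d1 d2
    exact cne hyA hzA (fun h => hzy (h.symm)) (by linear_combination -this)
  interval_cases hAc : A.card
  · exact Or.inl (Finset.card_eq_zero.mp hAc)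
  · obtain ⟨x, rfl⟩ := Finset.card_eq_one.mp hAc
    exact Or.inr (Or.inl ⟨x, hA (Finset.mem_singleton_self x), rfl⟩)
  · obtain ⟨x, y, hxy, rfl⟩ := Finset.card_eq_two.mp hAc
    have hx : x ∈ ({x, y} : Finset ℕ) := Finset.mem_insert_self x _
    have hy : y ∈ ({x, y} : Finset ℕ) := Finset.mem_insert_of_mem (Finset.mem_singleton_self y)
    have hne : (x : ZMod n) ≠ (y : ZMod n) := fun h => hxy (cast_inj_Icc (hA hx) (hA hy) h)
    exact Or.inr (Or.inr ⟨x, hx, y, hy, rfl, hne, hno x hx y hy hne⟩)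

lemma pair_injective {c : ℕ} (hc : 0 < c) :
    Function.Injective (fun x : ℕ => ({x, x + c} : Finset ℕ)) := by
  intro x y h
  simp only at h
  have h1 : x ∈ ({y, y + c} : Finset ℕ) := h ▸ Finset.mem_insert_self x _
  have h2 : y ∈ ({x, x + c} : Finset ℕ) := h.symm ▸ Finset.mem_insert_self y _
  simp only [Finset.mem_insert, Finset.mem_singleton] at h1 h2
  omega

lemma mfin_card (hn : 3 ≤ n) :
    (Mfin n).card = (2^n - (1 + n + ap n)) * (2*n) + (1 + n*n + (ap n) * n) := by
  classical
  -- the three "small" families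
  set P : Finset (Finset ℕ) := (Finset.Icc 1 n).powerset with hP
  set P1 : Finset (Finset ℕ) := (Finset.Icc 1 n).image (fun x => ({x} : Finset ℕ)) with hP1
  set P2 : Finset (Finset ℕ) :=
    if n % 2 = 0 then (Finset.Icc 1 (n/2)).image (fun x => ({x, x + n/2} : Finset ℕ))
    else ∅ with hP2
  set Q : Finset (Finset ℕ) := insert ∅ (P1 ∪ P2) with hQ
  have hn2 : 1 ≤ n / 2 ∧ n / 2 ≤ n := by omega
  -- memberships of P2
  have hP2mem : ∀ B ∈ P2, ∃ x, 1 ≤ x ∧ x + n/2 ≤ n ∧ n % 2 = 0 ∧ B = {x, x + n/2} := by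
    intro B hB
    rw [hP2] at hB
    split at hB
    · next he =>
      obtain ⟨x, hx, rfl⟩ := Finset.mem_image.mp hB
      simp only [Finset.mem_Icc] at hx
      exact ⟨x, hx.1, by omega, he, rfl⟩
    · exact absurd hB (Finset.notMem_empty B)
  have hQP : Q ⊆ P := by
    intro B hB
    rw [hQ] at hB
    rw [hP, Finset.mem_powerset]
    rcases Finset.mem_insert.mp hB with rfl | hB
    · exact Finset.empty_subset _
    · rcases Finset.mem_union.mp hB with hB | hB
      · obtain ⟨x, hx, rfl⟩ := Finset.mem_image.mp hB
        simp only [Finset.singleton_subset_iff]; exact hx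
      · obtain ⟨x, h1, h2, -, rfl⟩ := hP2mem _ hB
        intro i hi
        simp only [Finset.mem_insert, Finset.mem_singleton] at hi
        rcases hi with rfl | rfl <;> simp only [Finset.mem_Icc] <;> omega
  -- disjointness for biUnion
  have hdisj : ∀ A ∈ P, ∀ B ∈ P, A ≠ B → Disjoint (SA n A) (SA n B) := by
    intro A hA B hB hAB
    rw [Finset.disjoint_left]
    intro f hfA hfB
    obtain ⟨k, b, rfl⟩ := mem_SA.mp hfA
    obtain ⟨k', b', he⟩ := mem_SA.mp hfB
    exact hAB (restr_domF_inj (Finset.mem_powerset.mp hA) (Finset.mem_powerset.mp hB) he)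
  have hcard : (Mfin n).card = ∑ A ∈ P, (SA n A).card := Finset.card_biUnion hdisj
  -- split the sum
  have hsplit : ∑ A ∈ P, (SA n A).card
      = ∑ A ∈ P \ Q, (SA n A).card + ∑ A ∈ Q, (SA n A).card :=
    (Finset.sum_sdiff hQP).symm
  -- generic part
  have hgeneric : ∀ A ∈ P \ Q, (SA n A).card = 2 * n := by
    intro A hA
    obtain ⟨hAP, hAQ⟩ := Finset.mem_sdiff.mp hA
    have hAsub : A ⊆ Finset.Icc 1 n := Finset.mem_powerset.mp hAP
    by_cases hno : ∃ x ∈ A, ∃ y ∈ A, (x : ZMod n) ≠ (y : ZMod n) ∧ 2 * ((x:ZMod n) - y) ≠ 0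
    · obtain ⟨x, hx, y, hy, h1, h2⟩ := hno
      exact SA_card_generic hx hy h1 h2
    · exfalso
      rcases classify hAsub hno with rfl | ⟨x, hx, rfl⟩ | ⟨x, hx, y, hy, rfl, hne, h2⟩
      · exact hAQ (Finset.mem_insert_self _ _)
      · exact hAQ (Finset.mem_insert_of_mem (Finset.mem_union_left _
          (Finset.mem_image.mpr ⟨x, hx, rfl⟩)))
      · have := (antipodal_iff (hAsub hx) (hAsub hy)).mp ⟨h2, hne⟩
        obtain ⟨hev, hor⟩ := this
        apply hAQ
        refine Finset.mem_insert_of_mem (Finset.mem_union_right _ ?_)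
        rw [hP2, if_pos hev]
        have hxm := Finset.mem_Icc.mp (hAsub hx)
        have hym := Finset.mem_Icc.mp (hAsub hy)
        rcases hor with h | h
        · exact Finset.mem_image.mpr ⟨x, Finset.mem_Icc.mpr ⟨by omega, by omega⟩, by rw [h]⟩
        · refine Finset.mem_image.mpr ⟨y, Finset.mem_Icc.mpr ⟨by omega, by omega⟩, ?_⟩
          rw [h, Finset.pair_comm]
  have hsum_gen : ∑ A ∈ P \ Q, (SA n A).card = (P \ Q).card * (2 * n) := by
    rw [Finset.sum_congr rfl hgeneric, Finset.sum_const, smul_eq_mul]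
  -- Q part
  have hemptyQ : (∅ : Finset ℕ) ∉ P1 ∪ P2 := by
    intro h
    rcases Finset.mem_union.mp h with h | h
    · obtain ⟨x, -, hx⟩ := Finset.mem_image.mp h
      exact (Finset.singleton_ne_empty x) hx
    · obtain ⟨x, -, -, -, hx⟩ := hP2mem _ h
      exact (Finset.insert_ne_empty _ _) hx.symm
  have hP1P2 : Disjoint P1 P2 := by
    rw [Finset.disjoint_left]
    intro B hB1 hB2
    obtain ⟨x, -, rfl⟩ := Finset.mem_image.mp hB1
    obtain ⟨y, -, -, -, he⟩ := hP2mem _ hB2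
    have : ({x} : Finset ℕ).card = ({y, y + n/2} : Finset ℕ).card := by rw [he]
    rw [Finset.card_singleton, Finset.card_insert_of_notMem (by
      simp only [Finset.mem_singleton]; omega)] at this
    simp at this
  have hsum_Q : ∑ A ∈ Q, (SA n A).card = 1 + n * n + (ap n) * n := by
    rw [hQ, Finset.sum_insert hemptyQ, Finset.sum_union hP1P2, SA_card_empty]
    have hs1 : ∑ A ∈ P1, (SA n A).card = n * n := by
      rw [hP1, Finset.sum_image (fun x _ y _ h => Finset.singleton_injective h)]
      rw [Finset.sum_congr rfl (fun x hx => SA_card_singleton hx), Finset.sum_const,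
        Nat.card_Icc, smul_eq_mul, Nat.add_sub_cancel]
    have hs2 : ∑ A ∈ P2, (SA n A).card = (ap n) * n := by
      rw [hP2, ap]
      split
      · next hev =>
        rw [Finset.sum_image (fun x _ y _ h => pair_injective (by omega) h)]
        have : ∀ x ∈ Finset.Icc 1 (n/2), (SA n ({x, x + n/2} : Finset ℕ)).card = n := by
          intro x hx
          simp only [Finset.mem_Icc] at hx
          have hxm : x ∈ Finset.Icc 1 n := Finset.mem_Icc.mpr ⟨hx.1, by omega⟩
          have hym : x + n/2 ∈ Finset.Icc 1 n := Finset.mem_Icc.mpr ⟨by omega, by omega⟩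
          obtain ⟨h2, hne⟩ := (antipodal_iff hxm hym).mpr ⟨hev, Or.inl rfl⟩
          exact SA_card_antip hxm hym hne (by linear_combination -h2)
        rw [Finset.sum_congr rfl this, Finset.sum_const, Nat.card_Icc, smul_eq_mul,
          Nat.add_sub_cancel]
      · simp
    rw [hs1, hs2]; ring
  -- cards
  have hQcard : Q.card = 1 + (n + ap n) := by
    rw [hQ, Finset.card_insert_of_notMem hemptyQ, Finset.card_union_of_disjoint hP1P2]
    have h1 : P1.card = n := by
      rw [hP1, Finset.card_image_of_injective _ Finset.singleton_injective, Nat.card_Icc,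
        Nat.add_sub_cancel]
    have h2 : P2.card = ap n := by
      rw [hP2, ap]
      split
      · next hev =>
        rw [Finset.card_image_of_injective _ (pair_injective (by omega)), Nat.card_Icc,
          Nat.add_sub_cancel]
      · simp
    rw [h1, h2]; omega
  have hPcard : P.card = 2^n := by
    rw [hP, Finset.card_powerset, Nat.card_Icc, Nat.add_sub_cancel]
  have hPQcard : (P \ Q).card = 2^n - (1 + n + ap n) := by
    rw [Finset.card_sdiff_of_subset hQP, hQcard, hPcard]
    omega
  rw [hcard, hsplit, hsum_gen, hsum_Q, hPQcard]

end Count2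

lemma two_pow_bound {n : ℕ} (hn : 3 ≤ n) : 1 + n + ap n ≤ 2^n := by
  have hap : ap n ≤ n / 2 := by unfold ap; split <;> omega
  have key : ∀ k : ℕ, 2*(k+3) + 2 ≤ 2^(k+3) := by
    intro k
    induction k with
    | zero => norm_num
    | succ k ih =>
      have h1 : 1 ≤ 2^(k+3) := Nat.one_le_two_pow
      have h2 : 2^(k+1+3) = 2^(k+3) * 2 := by rw [pow_succ]
      omega
  have := key (n - 3)
  have h3 : n - 3 + 3 = n := by omega
  rw [h3] at this
  omega

/-- `|DPC_n| = n·2^{n+1} - n² - 2n + 1` for odd `n`, and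
`n·2^{n+1} - (3/2)n² - 2n + 1` for even `n`. -/
theorem stmt_11 (n : ℕ) (hn : 3 ≤ n) :
    (Odd n → (Set.ncard {f : ℕ → Option ℕ | PIso n f} : ℤ) =
      n * 2 ^ (n + 1) - n ^ 2 - 2 * n + 1) ∧
    (Even n → 2 * (Set.ncard {f : ℕ → Option ℕ | PIso n f} : ℤ) =
      n * 2 ^ (n + 2) - 3 * n ^ 2 - 4 * n + 2) := by
  haveI : NeZero n := ⟨by omega⟩
  have hset : {f : ℕ → Option ℕ | PIso n f}.ncard = (Mfin n).card := by
    rw [piso_set_eq]; exact Set.ncard_coe_finset _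
  have hm := mfin_card (n := n) hn
  have hb : 1 + n + ap n ≤ 2^n := two_pow_bound hn
  have hcast : ((Mfin n).card : ℤ) =
      ((2:ℤ)^n - (1 + (n:ℤ) + (ap n : ℤ))) * (2*(n:ℤ)) + (1 + (n:ℤ)*n + (ap n : ℤ) * n) := by
    zify [hb] at hm
    rw [hm]
    try push_cast
    try ring
  constructor
  · intro hodd
    have hap : ap n = 0 := by
      unfold ap; have := Nat.odd_iff.mp hodd; simp [this]
    rw [hset, hcast, hap]
    simp only [Nat.cast_zero]
    ring
  · intro heven
    have hev : n % 2 = 0 := Nat.even_iff.mp heven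
    have hap : ap n = n / 2 := by unfold ap; simp [hev]
    have h2t : 2 * ((n / 2 : ℕ) : ℤ) = (n : ℤ) := by omega
    rw [hset, hcast, hap]
    linear_combination (-(n:ℤ)) * h2t
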